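/- Fix k₀ > 0 and let θ(k) = −(1/(4k₀²))·(k + k₀²/k) for k ∈ ℂ \ {0}. For every real u ≥ 0, the point k = k₀ + u·k₀·e^{iπ/4} satisfies Re(i·θ(k)) = (√2·u/(8k₀))·(√2·u + u²)/(1 + √2·u + u²), and consequently Re(i·θ(k)) ≥ (1/(4k₀))·u²/(u² + √2·u + 1) and Re(i·θ(k)) ≥ (√2/(8k₀))·u³/(u² + √2·u + 1). -/

import Mathlib

theorem re_i_theta_on_upper_ray (k₀ u : ℝ) (hk₀ : 0 < k₀) (hu0 : 0 ≤ u) (k : ℂ)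
    (hk : k = (k₀ : ℂ) + (u : ℂ) * (k₀ : ℂ) * Complex.exp ((Real.pi / 4) * Complex.I)) :
    (Complex.I * (-(1 / (4 * (k₀ : ℂ) ^ 2)) * (k + (k₀ : ℂ) ^ 2 / k))).re
        = Real.sqrt 2 * u / (8 * k₀) * ((Real.sqrt 2 * u + u ^ 2) / (1 + Real.sqrt 2 * u + u ^ 2)) ∧
      1 / (4 * k₀) * (u ^ 2 / (u ^ 2 + Real.sqrt 2 * u + 1))
        ≤ (Complex.I * (-(1 / (4 * (k₀ : ℂ) ^ 2)) * (k + (k₀ : ℂ) ^ 2 / k))).re ∧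
      Real.sqrt 2 / (8 * k₀) * (u ^ 3 / (u ^ 2 + Real.sqrt 2 * u + 1))
        ≤ (Complex.I * (-(1 / (4 * (k₀ : ℂ) ^ 2)) * (k + (k₀ : ℂ) ^ 2 / k))).re := by
  have hs2 : Real.sqrt 2 ^ 2 = 2 := Real.sq_sqrt (by norm_num)
  have hs0 : 0 < Real.sqrt 2 := Real.sqrt_pos.mpr (by norm_num)
  set s := Real.sqrt 2 with hsdef
  have hexp : Complex.exp ((Real.pi / 4) * Complex.I)
      = ((s/2 : ℝ) : ℂ) + ((s/2 : ℝ) : ℂ) * Complex.I := by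
    rw [show ((Real.pi : ℂ) / 4) = ((Real.pi / 4 : ℝ) : ℂ) by push_cast; ring,
      Complex.exp_mul_I, ← Complex.ofReal_cos, ← Complex.ofReal_sin,
      Real.cos_pi_div_four, Real.sin_pi_div_four]
  have hkre : k.re = k₀ * (1 + u * s / 2) := by
    simp [hk, hexp]; ring
  have hkim : k.im = k₀ * (u * s / 2) := by
    simp [hk, hexp]; ring
  have hD : (0:ℝ) < 1 + s * u + u ^ 2 := by nlinarith
  have hnsq : Complex.normSq k = k₀ ^ 2 * (1 + s * u + u ^ 2) := by
    simp only [Complex.normSq_apply, hkre, hkim]; nlinarith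
  have key : (Complex.I * (-(1 / (4 * (k₀ : ℂ) ^ 2)) * (k + (k₀ : ℂ) ^ 2 / k))).re
      = (1/(4*k₀^2)) * (k.im - k₀^2 * k.im / Complex.normSq k) := by
    rw [show (4 * (k₀:ℂ)^2) = ((4*k₀^2 : ℝ) : ℂ) by push_cast; ring,
      show ((k₀:ℂ)^2) = ((k₀^2:ℝ):ℂ) by push_cast; ring]
    simp [Complex.div_im, Complex.div_re, Complex.normSq_apply, ← Complex.ofReal_pow]
    tauto
  have hre : (Complex.I * (-(1 / (4 * (k₀ : ℂ) ^ 2)) * (k + (k₀ : ℂ) ^ 2 / k))).re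
      = s * u / (8 * k₀) * ((s * u + u ^ 2) / (1 + s * u + u ^ 2)) := by
    rw [key, hkim, hnsq]
    field_simp
    ring
  have hE : (0:ℝ) < 8 * k₀ * (1 + s * u + u ^ 2) := by positivity
  have e1 : s * u / (8 * k₀) * ((s * u + u ^ 2) / (1 + s * u + u ^ 2))
      = (2 * u ^ 2 + s * u ^ 3) / (8 * k₀ * (1 + s * u + u ^ 2)) := by
    rw [div_mul_div_comm]
    congr 1
    linear_combination u ^ 2 * hs2
  refine ⟨hre, ?_, ?_⟩
  · rw [hre, e1, show 1 / (4 * k₀) * (u ^ 2 / (u ^ 2 + s * u + 1))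
        = (2 * u ^ 2) / (8 * k₀ * (1 + s * u + u ^ 2)) from by
      field_simp; ring]
    gcongr
    nlinarith [mul_nonneg hs0.le (pow_nonneg hu0 3)]
  · rw [hre, e1, show s / (8 * k₀) * (u ^ 3 / (u ^ 2 + s * u + 1))
        = (s * u ^ 3) / (8 * k₀ * (1 + s * u + u ^ 2)) from by
      rw [div_mul_div_comm]; congr 1 <;> ring]
    gcongr
    nlinarith [sq_nonneg u]
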